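/- Let ρ ≥ 2 be an integer and let ⟨x,y⟩ = x_1y_1 + ⋯ + x_{ρ−1}y_{ρ−1} − x_ρy_ρ be the Minkowski form on ℝ^ρ. If v_1, …, v_k ∈ ℝ^ρ satisfy ⟨v_i,v_i⟩ = 1 for all i and ⟨v_i,v_j⟩ = −1 for all i ≠ j, then k ≤ ρ. (Thus a cluster of mutually tangent hyperspheres in ℝ^{ρ−2} has at most ρ members; in particular, for k ≥ 3 such vectors are linearly independent because their Gram matrix J_k is nondegenerate.) -/

import Mathlib

/-- The Minkowski form `x₁y₁ + ⋯ + x_{ρ-1}y_{ρ-1} - x_ρ y_ρ` on `ℝ^ρ`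
(the last coordinate carries the minus sign). -/
noncomputable def mink {ρ : ℕ} (x y : Fin ρ → ℝ) : ℝ :=
  ∑ i : Fin ρ, (if (i : ℕ) = ρ - 1 then -(x i * y i) else x i * y i)

lemma mink_sum_left {ρ k : ℕ} (c : Fin k → ℝ) (u : Fin k → Fin ρ → ℝ) (w : Fin ρ → ℝ) :
    mink (∑ j, c j • u j) w = ∑ j, c j * mink (u j) w := by
  unfold mink
  have lhs : (∑ i : Fin ρ, if (i:ℕ) = ρ - 1 then -((∑ j, c j • u j) i * w i)
      else (∑ j, c j • u j) i * w i)
      = ∑ i : Fin ρ, ∑ j : Fin k,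
        (if (i:ℕ) = ρ - 1 then -(c j * (u j i * w i)) else c j * (u j i * w i)) := by
    refine Finset.sum_congr rfl fun i _ => ?_
    simp only [Finset.sum_apply, Pi.smul_apply, smul_eq_mul, Finset.sum_mul]
    split_ifs with h
    · rw [← Finset.sum_neg_distrib]
      exact Finset.sum_congr rfl fun j _ => by ring
    · exact Finset.sum_congr rfl fun j _ => by ring
  rw [lhs, Finset.sum_comm]
  refine Finset.sum_congr rfl fun j _ => ?_
  rw [Finset.mul_sum]
  exact Finset.sum_congr rfl fun i _ => by split_ifs with h <;> ring

/-- A cluster of mutually tangent hyperspheres in `ℝ^{ρ-2}`, i.e. vectors in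
Minkowski space `ℝ^{ρ-1,1}` with `⟨vᵢ,vᵢ⟩ = 1` and `⟨vᵢ,vⱼ⟩ = -1` for `i ≠ j`,
has at most `ρ` members. -/
theorem mutually_tangent_cluster_card_le (ρ k : ℕ) (hρ : 2 ≤ ρ)
    (v : Fin k → Fin ρ → ℝ)
    (hvi : ∀ i, mink (v i) (v i) = 1)
    (hvij : ∀ i j, i ≠ j → mink (v i) (v j) = -1) :
    k ≤ ρ := by
  by_contra h
  push_neg at h
  have hdep : ¬ LinearIndependent ℝ v := by
    intro hli
    have := hli.fintype_card_le_finrank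
    simp [Module.finrank_fintype_fun_eq_card] at this
    omega
  rw [Fintype.not_linearIndependent_iff] at hdep
  obtain ⟨c, hc0, i0, hi0⟩ := hdep
  set S := ∑ j, c j with hS
  have key : ∀ j, 2 * c j = S := by
    intro j
    have h1 : mink (∑ i, c i • v i) (v j) = 0 := by
      rw [hc0]; simp [mink]
    rw [mink_sum_left] at h1
    rw [← Finset.add_sum_erase _ _ (Finset.mem_univ j)] at h1
    have h2 : ∑ i ∈ Finset.univ.erase j, c i * mink (v i) (v j)
        = ∑ i ∈ Finset.univ.erase j, (- c i) := by
      refine Finset.sum_congr rfl fun i hi => ?_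
      rw [hvij i j (Finset.ne_of_mem_erase hi)]; ring
    rw [h2, hvi j] at h1
    have h3 : ∑ i ∈ Finset.univ.erase j, c i = S - c j :=
      Finset.sum_erase_eq_sub (Finset.mem_univ j)
    rw [Finset.sum_neg_distrib, h3] at h1
    linarith
  have hSsum : 2 * S = (k : ℝ) * S := by
    have : ∑ j : Fin k, 2 * c j = ∑ j : Fin k, S := Finset.sum_congr rfl fun j _ => key j
    rw [← Finset.mul_sum, Finset.sum_const, Finset.card_univ, Fintype.card_fin] at this
    rw [nsmul_eq_mul] at this
    exact this
  have hk3 : (3 : ℝ) ≤ (k : ℝ) := by exact_mod_cast (by omega : 3 ≤ k)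
  have hS0 : S = 0 := by
    rcases mul_eq_mul_right_iff.mp hSsum.symm with h | h
    · linarith
    · exact h
  have := key i0
  rw [hS0] at this
  exact hi0 (by linarith)
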